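/- Let Ψ : (0, ∞) → (0, ∞) be differentiable with Ψ'(x) > 0 for all x > 0, and let θ : (0, ∞) → (0, ∞) be a positive increasing function. Suppose there exists a ∈ (0, 1/2) such that Ψ(z + a·ln z)/Ψ(z + θ(z)) ≥ 1 + 1/(2z) for all sufficiently large z. Then for all sufficiently large n, Σ_{k ≥ n − ⌊ln n⌋/2 − 1} 1/Ψ(k + θ(k)) ≥ Σ_{k ≥ n} 1/Ψ(k), where both sums run over integers k. -/

import Mathlib

open Filter
open scoped ENNReal Classical


private lemma abel_aux' (m : ℕ) (w c e : ℕ → ℝ)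
    (hw0 : ∀ j, m ≤ j → 0 ≤ w j) (hwa : ∀ j, m ≤ j → w (j+1) ≤ w j)
    (hmaj : ∀ t, ∑ j ∈ Finset.Ico m t, e j ≤ ∑ j ∈ Finset.Ico m t, c j) :
    ∀ T, ∑ j ∈ Finset.Ico m T, e j * w j ≤ ∑ j ∈ Finset.Ico m T, c j * w j := by
  have main : ∀ T, m ≤ T →
      ∑ j ∈ Finset.Ico m T, e j * w j
        + (∑ j ∈ Finset.Ico m T, c j - ∑ j ∈ Finset.Ico m T, e j) * w T
        ≤ ∑ j ∈ Finset.Ico m T, c j * w j := by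
    intro T hT
    induction T, hT using Nat.le_induction with
    | base => simp
    | succ T hT IH =>
      rw [Finset.sum_Ico_succ_top hT, Finset.sum_Ico_succ_top hT,
        Finset.sum_Ico_succ_top hT, Finset.sum_Ico_succ_top hT]
      have hD : 0 ≤ (∑ j ∈ Finset.Ico m T, c j + c T) - (∑ j ∈ Finset.Ico m T, e j + e T) := by
        have := hmaj (T+1)
        rw [Finset.sum_Ico_succ_top hT, Finset.sum_Ico_succ_top hT] at this
        linarith
      have hw : w (T+1) ≤ w T := hwa T hT
      have hkey := mul_le_mul_of_nonneg_left hw hD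
      linarith
  intro T
  rcases le_or_gt m T with hT | hT
  · have h2 := main T hT
    have h3 : 0 ≤ (∑ j ∈ Finset.Ico m T, c j - ∑ j ∈ Finset.Ico m T, e j) * w T :=
      mul_nonneg (by linarith [hmaj T]) (hw0 T hT)
    linarith
  · rw [Finset.Ico_eq_empty (by omega)]
    simp

private lemma harmonic_aux' (m : ℕ) (hm : 1 ≤ m) : ∀ t, m ≤ t →
    Real.log t - Real.log m ≤ ∑ j ∈ Finset.Ico m t, (1:ℝ)/j := by
  intro t ht
  induction t, ht using Nat.le_induction with
  | base => simp
  | succ t ht IH =>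
    rw [Finset.sum_Ico_succ_top ht]
    have ht1 : (1:ℝ) ≤ (t:ℝ) := by exact_mod_cast hm.trans ht
    have h0 : (0:ℝ) < t := by linarith
    have hlog : Real.log ((t:ℝ)+1) - Real.log t ≤ 1/(t:ℝ) := by
      rw [← Real.log_div (by positivity) (by positivity)]
      have h1 := Real.log_le_sub_one_of_pos (show (0:ℝ) < ((t:ℝ)+1)/t by positivity)
      have heq : ((t:ℝ)+1)/(t:ℝ) - 1 = 1/t := by field_simp; ring
      linarith
    push_cast
    linarith

set_option maxHeartbeats 2000000 in
/-- Let `Ψ : (0,∞) → (0,∞)` be differentiable with positive derivative, and let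
`θ : (0,∞) → (0,∞)` be positive and increasing.  If there is `a ∈ (0, 1/2)` with
`Ψ(z + a·ln z)/Ψ(z + θ(z)) ≥ 1 + 1/(2z)` for all large `z`, then for all large `n`,
`Σ_{k ≥ n − ⌊ln n⌋/2 − 1} 1/Ψ(k + θ(k)) ≥ Σ_{k ≥ n} 1/Ψ(k)`, the sums running over
integers `k` and being understood in the extended reals. -/
theorem tsum_inv_shift_ge_of_ratio_ge
    (Ψ θ : ℝ → ℝ)
    (hΨpos : ∀ x > (0 : ℝ), 0 < Ψ x)
    (hΨderiv : ∀ x > (0 : ℝ), ∃ d : ℝ, 0 < d ∧ HasDerivAt Ψ d x)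
    (hθpos : ∀ x > (0 : ℝ), 0 < θ x)
    (hθmono : StrictMonoOn θ (Set.Ioi 0))
    (hprot : ∃ a : ℝ, 0 < a ∧ a < 1 / 2 ∧
      ∀ᶠ z : ℝ in atTop, 1 + 1 / (2 * z) ≤ Ψ (z + a * Real.log z) / Ψ (z + θ z)) :
    ∀ᶠ n : ℕ in atTop,
      (∑' k : ℕ, if (n : ℝ) ≤ (k : ℝ) then ENNReal.ofReal (1 / Ψ k) else 0)
        ≤ ∑' k : ℕ, if (n : ℝ) - (⌊Real.log n⌋ : ℝ) / 2 - 1 ≤ (k : ℝ) then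
            ENNReal.ofReal (1 / Ψ ((k : ℝ) + θ k)) else 0 := by
  obtain ⟨a, ha0, ha2, hev⟩ := hprot
  rw [Filter.eventually_atTop] at hev
  obtain ⟨Z₀, hZ₀⟩ := hev
  -- monotonicity of Ψ
  have hle : ∀ u v : ℝ, 0 < u → u ≤ v → Ψ u ≤ Ψ v := by
    have hΨc : ContinuousOn Ψ (Set.Ioi 0) := fun x hx =>
      ((hΨderiv x hx).choose_spec.2.continuousAt).continuousWithinAt
    have hΨd : ∀ x ∈ interior (Set.Ioi (0:ℝ)), 0 < deriv Ψ x := by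
      rw [interior_Ioi]
      intro x hx
      obtain ⟨d, hd, hD⟩ := hΨderiv x hx
      rw [hD.deriv]; exact hd
    have hmono : StrictMonoOn Ψ (Set.Ioi 0) :=
      strictMonoOn_of_deriv_pos (convex_Ioi 0) hΨc hΨd
    intro u v hu huv
    exact hmono.monotoneOn (Set.mem_Ioi.2 hu) (Set.mem_Ioi.2 (lt_of_lt_of_le hu huv)) huv
  -- basic log facts
  have hlognn : ∀ j : ℕ, 0 ≤ Real.log j := by
    intro j
    rcases Nat.eq_zero_or_pos j with rfl | hj
    · simp
    · exact Real.log_nonneg (by exact_mod_cast hj)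
  have hlogmono : ∀ i j : ℕ, i ≤ j → Real.log i ≤ Real.log j := by
    intro i j hij
    rcases Nat.eq_zero_or_pos i with rfl | hi
    · simp only [Nat.cast_zero, Real.log_zero]; exact hlognn j
    · exact Real.log_le_log (by exact_mod_cast hi) (by exact_mod_cast hij)
  have hlogsucc : ∀ j : ℕ, 1 ≤ j → Real.log (j+1:ℕ) ≤ Real.log j + 1/(j:ℝ) := by
    intro j hj
    have hj1 : (1:ℝ) ≤ (j:ℝ) := by exact_mod_cast hj
    have h0 : (0:ℝ) < j := by linarith
    have h1 := Real.log_le_sub_one_of_pos (show (0:ℝ) < ((j:ℝ)+1)/j by positivity)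
    have h2 : Real.log (((j:ℝ)+1)/j) = Real.log ((j:ℝ)+1) - Real.log j :=
      Real.log_div (by positivity) (by positivity)
    have heq : ((j:ℝ)+1)/(j:ℝ) - 1 = 1/j := by field_simp; ring
    push_cast
    linarith
  -- the integer shift function
  set H : ℕ → ℕ := fun j => ⌈a * Real.log j⌉₊ with hH_def
  set G : ℕ → ℕ := fun j => j + H j with hG_def
  have hHmono : Monotone H := by
    apply monotone_nat_of_le_succ
    intro j
    exact Nat.ceil_le_ceil (mul_le_mul_of_nonneg_left (hlogmono j (j+1) (by omega)) ha0.le)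
  have hHstep : ∀ j : ℕ, H (j+1) ≤ H j + 1 := by
    intro j
    have h1 : a * Real.log (j+1:ℕ) ≤ a * Real.log j + 1 := by
      rcases Nat.eq_zero_or_pos j with rfl | hj
      · norm_num [Real.log_zero, Real.log_one]
      · have := hlogsucc j hj
        have hj1 : (1:ℝ) ≤ (j:ℝ) := by exact_mod_cast hj
        have : Real.log (j+1:ℕ) ≤ Real.log j + 1 := by
          have : 1/(j:ℝ) ≤ 1 := by
            rw [div_le_one (by linarith)]; linarith
          linarith [hlogsucc j hj]
        nlinarith [hlognn j]
    calc H (j+1) ≤ ⌈a * Real.log j + 1⌉₊ := Nat.ceil_le_ceil h1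
    _ = H j + 1 := by
      rw [hH_def]
      exact Nat.ceil_add_one (by positivity)
  have hdic : ∀ j : ℕ, (H (j+1) = H j ∧ G (j+1) = G j + 1) ∨
      (H (j+1) = H j + 1 ∧ G (j+1) = G j + 2) := by
    intro j
    have h1 : H j ≤ H (j+1) := hHmono (by omega : j ≤ j+1)
    have h2 := hHstep j
    rcases Nat.lt_or_ge (H (j+1)) (H j + 1) with h | h
    · left; constructor; · omega
      simp only [hG_def]; omega
    · right; constructor; · omega
      simp only [hG_def]; omega
  have hGmono : Monotone G := fun i j hij => by
    simp only [hG_def]; exact Nat.add_le_add hij (hHmono hij)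
  have hGge : ∀ j, j ≤ G j := fun j => Nat.le_add_right _ _
  -- eventual largeness
  have hlogT : Filter.Tendsto (fun n : ℕ => Real.log n) atTop atTop :=
    Real.tendsto_log_atTop.comp tendsto_natCast_atTop_atTop
  have hhalfT : Filter.Tendsto (fun n : ℕ => (n:ℝ)/2) atTop atTop :=
    tendsto_natCast_atTop_atTop.atTop_div_const two_pos
  filter_upwards [hlogT.eventually_ge_atTop (max 1 (6/(1-2*a))),
    hhalfT.eventually_ge_atTop (max Z₀ (max (a/(1-2*a)) 2))] with n hn1 hn2
  have hlog1 : 1 ≤ Real.log n := le_trans (le_max_left _ _) hn1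
  have hlog6 : 6/(1-2*a) ≤ Real.log n := le_trans (le_max_right _ _) hn1
  have hnpos : 1 ≤ n := by
    by_contra hc
    push_neg at hc
    interval_cases n
    simp [Real.log_zero] at hlog1
    linarith
  have hnR : (1:ℝ) ≤ (n:ℝ) := by exact_mod_cast hnpos
  have h2a : (0:ℝ) < 1 - 2*a := by linarith
  set t : ℕ := ⌊Real.log n⌋.toNat with ht_def
  set s : ℕ := t / 2 with hs_def
  have htcast : (t:ℝ) = (⌊Real.log n⌋ : ℝ) := by
    rw [ht_def]
    have : (0:ℤ) ≤ ⌊Real.log n⌋ := Int.floor_nonneg.2 (by linarith)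
    exact_mod_cast congrArg Int.cast (Int.toNat_of_nonneg this)
  have ht_ub : (t:ℝ) ≤ Real.log n := htcast ▸ Int.floor_le _
  have ht_lb : Real.log n - 1 < (t:ℝ) := by
    rw [htcast]; exact Int.sub_one_lt_floor _
  have hs_ub : (s:ℝ) ≤ Real.log n / 2 := by
    calc (s:ℝ) ≤ (t:ℝ)/2 := by
          rw [hs_def]; exact_mod_cast Nat.cast_div_le
    _ ≤ Real.log n / 2 := by linarith
  have hs_lb : Real.log n / 2 - 1 ≤ (s:ℝ) := by
    have h1 : t ≤ s * 2 + 1 := by omega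
    have h2 : (t:ℝ) ≤ s * 2 + 1 := by exact_mod_cast h1
    linarith
  have hlogn_le : Real.log n ≤ (n:ℝ) - 1 := Real.log_le_sub_one_of_pos (by linarith)
  have hsn : s < n := by
    have : (s:ℝ) < (n:ℝ) := by
      calc (s:ℝ) ≤ Real.log n / 2 := hs_ub
      _ ≤ ((n:ℝ)-1)/2 := by linarith
      _ < n := by linarith
    exact_mod_cast this
  set m : ℕ := n - s with hm_def
  have hmcast : (m:ℝ) = (n:ℝ) - (s:ℝ) := by
    rw [hm_def]; push_cast [Nat.cast_sub hsn.le]; ring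
  have hm_half : (n:ℝ)/2 ≤ (m:ℝ) := by
    rw [hmcast]
    have : (s:ℝ) ≤ ((n:ℝ)-1)/2 := by linarith
    linarith
  have hmZ : Z₀ ≤ (m:ℝ) := le_trans (le_trans (le_max_left _ _) hn2) hm_half
  have hma : a/(1-2*a) ≤ (m:ℝ) :=
    le_trans (le_trans (le_trans (le_max_left _ _) (le_max_right _ _)) hn2) hm_half
  have hm2R : (2:ℝ) ≤ (m:ℝ) :=
    le_trans (le_trans (le_trans (le_max_right _ _) (le_max_right _ _)) hn2) hm_half
  have hm1 : 1 ≤ m := by exact_mod_cast le_trans (by norm_num : (1:ℝ) ≤ 2) hm2R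
  have hm1R : (1:ℝ) ≤ (m:ℝ) := by exact_mod_cast hm1
  have hmn : m + s = n := by omega
  have hmlen : m ≤ n := by omega
  -- G m < n
  have hHm : (H m : ℝ) < (s:ℝ) - 1 := by
    have h1 : (H m : ℝ) < a * Real.log m + 1 := Nat.ceil_lt_add_one (by positivity)
    have h2 : Real.log m ≤ Real.log n := hlogmono m n hmlen
    have h3 : a * Real.log m ≤ a * Real.log n := by nlinarith
    have h4 : (1-2*a) * Real.log n ≥ 6 := by
      rw [ge_iff_le, ← div_le_iff₀' h2a] at *
      exact hlog6
    nlinarith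
  have hGmn : G m < n := by
    have h5 : (H m : ℝ) < (s:ℝ) := by linarith
    have h6 : H m < s := by exact_mod_cast h5
    simp only [hG_def]
    omega
  -- the decreasing weight
  set v : ℕ → ℝ := fun k => 1 / Ψ (k:ℝ) with hv_def
  have hvpos : ∀ k : ℕ, 1 ≤ k → 0 < v k := by
    intro k hk
    have hk0 : (0:ℝ) < (k:ℝ) := by exact_mod_cast hk
    exact one_div_pos.2 (hΨpos _ hk0)
  have hvanti : ∀ i j : ℕ, 1 ≤ i → i ≤ j → v j ≤ v i := by
    intro i j hi hij
    have hi0 : (0:ℝ) < (i:ℝ) := by exact_mod_cast hi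
    exact one_div_le_one_div_of_le (hΨpos _ hi0) (hle _ _ hi0 (by exact_mod_cast hij))
  -- per-term estimate
  have hperterm : ∀ j : ℕ, m ≤ j → (1 + 1/(2*(j:ℝ))) * v (G j) ≤ 1 / Ψ ((j:ℝ) + θ j) := by
    intro j hj
    have hj1 : 1 ≤ j := le_trans hm1 hj
    have hjR : (1:ℝ) ≤ (j:ℝ) := by exact_mod_cast hj1
    have hjpos : (0:ℝ) < (j:ℝ) := by linarith
    have hZ : Z₀ ≤ (j:ℝ) := le_trans hmZ (by exact_mod_cast hj)
    have hkey := hZ₀ (j:ℝ) hZ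
    have hθj := hθpos (j:ℝ) hjpos
    have hden : 0 < Ψ ((j:ℝ) + θ j) := hΨpos _ (by linarith)
    have hGj1 : 1 ≤ G j := le_trans hj1 (hGge j)
    have hGpos : (0:ℝ) < ((G j : ℕ):ℝ) := by exact_mod_cast hGj1
    have hnum : 0 < Ψ (((G j : ℕ)):ℝ) := hΨpos _ hGpos
    have hlogj : 0 ≤ a * Real.log j := mul_nonneg ha0.le (hlognn j)
    have harg : (j:ℝ) + a * Real.log j ≤ ((G j : ℕ):ℝ) := by
      simp only [hG_def]
      push_cast
      have := Nat.le_ceil (a * Real.log j)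
      linarith
    have hargpos : (0:ℝ) < (j:ℝ) + a * Real.log j := by linarith
    have h1 : Ψ ((j:ℝ) + a * Real.log j) ≤ Ψ ((G j : ℕ):ℝ) := hle _ _ hargpos harg
    have h2 : (1 + 1/(2*(j:ℝ))) * Ψ ((j:ℝ) + θ j) ≤ Ψ ((j:ℝ) + a * Real.log j) :=
      (le_div_iff₀ hden).1 hkey
    have hfac : (0:ℝ) < 1 + 1/(2*(j:ℝ)) := by positivity
    simp only [hv_def]
    rw [mul_one_div, div_le_div_iff₀ hnum hden]
    nlinarith
  -- skip indicator and credit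
  set ee : ℕ → ℝ := fun j => if H (j+1) = H j + 1 then (1:ℝ) else 0 with hee_def
  set cc : ℕ → ℝ := fun j => if j = m then (1:ℝ) else 1/(2*(j:ℝ)) with hcc_def
  have hTel : ∀ J, m ≤ J → ∑ j ∈ Finset.Ico m J, ee j = (H J : ℝ) - (H m : ℝ) := by
    intro J hJ
    induction J, hJ using Nat.le_induction with
    | base => simp
    | succ J hJ IH =>
      rw [Finset.sum_Ico_succ_top hJ, IH]
      rcases hdic J with ⟨hH1, _⟩ | ⟨hH1, _⟩
      · have : ee J = 0 := by simp only [hee_def]; rw [if_neg (by omega)]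
        rw [this, hH1]; ring
      · have : ee J = 1 := by simp only [hee_def]; rw [if_pos hH1]
        rw [this, hH1]; push_cast; ring
  have hmaj : ∀ T, ∑ j ∈ Finset.Ico m T, ee j ≤ ∑ j ∈ Finset.Ico m T, cc j := by
    intro T
    rcases le_or_gt T m with hT | hT
    · rw [Finset.Ico_eq_empty (by omega)]
      simp
    · rw [hTel T hT.le, Finset.sum_eq_sum_Ico_succ_bot hT]
      have hcm : cc m = 1 := by simp [hcc_def]
      have hrest : ∑ j ∈ Finset.Ico (m+1) T, cc j = ∑ j ∈ Finset.Ico (m+1) T, 1/(2*(j:ℝ)) := by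
        refine Finset.sum_congr rfl fun j hj => ?_
        have := (Finset.mem_Ico.1 hj).1
        simp only [hcc_def]
        rw [if_neg (by omega)]
      have hhalf : ∑ j ∈ Finset.Ico (m+1) T, (1:ℝ)/(2*(j:ℝ))
          = (1/2) * ∑ j ∈ Finset.Ico (m+1) T, (1:ℝ)/(j:ℝ) := by
        rw [Finset.mul_sum]
        exact Finset.sum_congr rfl fun j _ => by ring
      have hharm := harmonic_aux' (m+1) (by omega) T (by omega)
      have hnonneg : (0:ℝ) ≤ ∑ j ∈ Finset.Ico (m+1) T, (1:ℝ)/(j:ℝ) :=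
        Finset.sum_nonneg fun j _ => by positivity
      rw [hcm, hrest, hhalf]
      have hHmT : H m ≤ H T := hHmono (by omega)
      rcases le_or_gt (H T) (H m + 1) with hN | hN
      · have h1 : (H T : ℝ) ≤ (H m : ℝ) + 1 := by exact_mod_cast hN
        linarith
      · have hN2 : (H m : ℝ) + 2 ≤ (H T : ℝ) := by exact_mod_cast hN
        have hceil_t : (H T : ℝ) < a * Real.log T + 1 :=
          Nat.ceil_lt_add_one (mul_nonneg ha0.le (hlognn T))
        have hceil_m : a * Real.log m ≤ (H m : ℝ) := Nat.le_ceil _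
        have hlogm1 : Real.log ((m+1:ℕ)) ≤ Real.log m + 1/(m:ℝ) := hlogsucc m hm1
        set N : ℝ := (H T:ℝ) - (H m:ℝ) with hN_def
        have hA : N - 1 < a * Real.log T - a * Real.log m := by
          simp only [hN_def]; linarith
        have hstep1 : (N - 1)/a ≤ Real.log T - Real.log m := by
          rw [div_le_iff₀ ha0]
          nlinarith
        have hS : Real.log T - Real.log (m+1:ℕ) ≤ ∑ j ∈ Finset.Ico (m+1) T, (1:ℝ)/(j:ℝ) := by
          exact_mod_cast hharm
        have h1m : 1/(2*(m:ℝ)) ≤ (1-2*a)/(2*a) := by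
          rw [div_le_div_iff₀ (by linarith) (by linarith)]
          have : a ≤ (m:ℝ) * (1-2*a) := (div_le_iff₀ h2a).1 hma
          nlinarith
        have hid : (N-1)/(2*a) = (N-1) + (N-1)*((1-2*a)/(2*a)) := by
          field_simp
          ring
        have h4 : 1*((1-2*a)/(2*a)) ≤ (N-1)*((1-2*a)/(2*a)) :=
          mul_le_mul_of_nonneg_right (by linarith) (div_nonneg h2a.le (by linarith))
        have hid2 : (1/2)*((N-1)/a - 1/(m:ℝ)) = (N-1)/(2*a) - 1/(2*(m:ℝ)) := by
          field_simp
        have hSfull : (N-1)/a - 1/(m:ℝ) ≤ ∑ j ∈ Finset.Ico (m+1) T, (1:ℝ)/(j:ℝ) := by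
          linarith
        have hmul := mul_le_mul_of_nonneg_left hSfull (by norm_num : (0:ℝ) ≤ 1/2)
        linarith
  -- decomposition of the block sum
  have hB : ∀ J, m ≤ J → ∑ k ∈ Finset.Ioc (G m) (G J), v k
      = ∑ j ∈ Finset.Ico m J, (v (G (j+1)) + (if H (j+1) = H j + 1 then v (G j + 1) else 0)) := by
    intro J hJ
    induction J, hJ using Nat.le_induction with
    | base => simp
    | succ J hJ IH =>
      rw [Finset.sum_Ico_succ_top hJ, ← IH,
        ← Finset.sum_Ioc_consecutive v (hGmono hJ) (hGmono (Nat.le_succ J))]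
      congr 1
      rcases hdic J with ⟨hH1, hG1⟩ | ⟨hH1, hG1⟩
      · rw [if_neg (by omega), hG1, Finset.sum_Ioc_succ_top (le_refl _)]
        simp
      · rw [if_pos hH1, hG1, show G J + 2 = (G J + 1) + 1 from rfl,
          Finset.sum_Ioc_succ_top (by omega), Finset.sum_Ioc_succ_top (le_refl _)]
        simp only [Finset.Ioc_self, Finset.sum_empty, zero_add]
        ring
  -- the key finite inequality
  have key : ∀ J, m ≤ J → ∑ k ∈ Finset.Icc n (G J), v k
      ≤ ∑ j ∈ Finset.Icc m J, (1 + 1/(2*(j:ℝ))) * v (G j) := by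
    intro J hJ
    have h0 : ∑ k ∈ Finset.Icc n (G J), v k ≤ ∑ k ∈ Finset.Ioc (G m) (G J), v k := by
      refine Finset.sum_le_sum_of_subset_of_nonneg ?_ (fun k hk _ => ?_)
      · intro k hk
        rw [Finset.mem_Icc] at hk
        rw [Finset.mem_Ioc]
        omega
      · refine (hvpos k ?_).le
        have := (Finset.mem_Ioc.1 hk).1
        have := hGge m
        omega
    have h1 : ∑ j ∈ Finset.Ico m J, (v (G (j+1)) + (if H (j+1) = H j + 1 then v (G j + 1) else 0))
        ≤ ∑ j ∈ Finset.Ico m J, v (G (j+1)) + ∑ j ∈ Finset.Ico m J, ee j * v (G j) := by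
      rw [← Finset.sum_add_distrib]
      refine Finset.sum_le_sum fun j hj => ?_
      have hjm : m ≤ j := (Finset.mem_Ico.1 hj).1
      have hGj1 : 1 ≤ G j := le_trans (le_trans hm1 hjm) (hGge j)
      refine add_le_add_right ?_ _
      simp only [hee_def]
      by_cases hcase : H (j+1) = H j + 1
      · rw [if_pos hcase, if_pos hcase, one_mul]
        exact hvanti (G j) (G j + 1) hGj1 (Nat.le_succ _)
      · rw [if_neg hcase, if_neg hcase, zero_mul]
    have h2 : ∑ j ∈ Finset.Ico m J, ee j * v (G j) ≤ ∑ j ∈ Finset.Ico m J, cc j * v (G j) := by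
      refine abel_aux' m (fun j => v (G j)) cc ee ?_ ?_ hmaj J
      · intro j hj
        exact (hvpos _ (le_trans (le_trans hm1 hj) (hGge j))).le
      · intro j hj
        exact hvanti (G j) (G (j+1)) (le_trans (le_trans hm1 hj) (hGge j)) (hGmono (Nat.le_succ j))
    have h3 : ∑ j ∈ Finset.Ico m J, v (G (j+1)) = ∑ j ∈ Finset.Icc (m+1) J, v (G j) := by
      rw [← Finset.Ico_add_one_right_eq_Icc, Finset.sum_Ico_eq_sum_range, Finset.sum_Ico_eq_sum_range,
        Nat.add_sub_add_right]
      refine Finset.sum_congr rfl fun i _ => ?_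
      rw [show m + i + 1 = m + 1 + i from by omega]
    have h4 : ∑ j ∈ Finset.Ico m J, cc j * v (G j)
        ≤ v (G m) + ∑ j ∈ Finset.Icc (m+1) J, (1/(2*(j:ℝ))) * v (G j) := by
      have hsum_nn : (0:ℝ) ≤ ∑ j ∈ Finset.Icc (m+1) J, (1/(2*(j:ℝ))) * v (G j) := by
        refine Finset.sum_nonneg fun j hj => ?_
        have hjm : m + 1 ≤ j := (Finset.mem_Icc.1 hj).1
        have : (0:ℝ) ≤ v (G j) := (hvpos _ (le_trans (by omega) (hGge j))).le
        positivity
      rcases eq_or_lt_of_le hJ with rfl | hJl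
      · rw [Finset.Ico_self, Finset.sum_empty]
        have : (0:ℝ) ≤ v (G m) := (hvpos _ (le_trans hm1 (hGge m))).le
        linarith
      · rw [Finset.sum_eq_sum_Ico_succ_bot hJl]
        have hcm : cc m = 1 := by simp [hcc_def]
        rw [hcm, one_mul]
        refine add_le_add_right ?_ _
        have heq : ∑ j ∈ Finset.Ico (m+1) J, cc j * v (G j)
            = ∑ j ∈ Finset.Ico (m+1) J, (1/(2*(j:ℝ))) * v (G j) := by
          refine Finset.sum_congr rfl fun j hj => ?_
          have := (Finset.mem_Ico.1 hj).1
          simp only [hcc_def]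
          rw [if_neg (by omega)]
        rw [heq]
        refine Finset.sum_le_sum_of_subset_of_nonneg ?_ (fun j hj _ => ?_)
        · intro x hx
          rw [Finset.mem_Ico] at hx
          rw [Finset.mem_Icc]
          omega
        · have hjm : m + 1 ≤ j := (Finset.mem_Icc.1 hj).1
          have : (0:ℝ) ≤ v (G j) := (hvpos _ (le_trans (by omega) (hGge j))).le
          positivity
    have h5 : v (G m) + ∑ j ∈ Finset.Icc (m+1) J, (1/(2*(j:ℝ))) * v (G j)
          + ∑ j ∈ Finset.Icc (m+1) J, v (G j)
        ≤ ∑ j ∈ Finset.Icc m J, (1 + 1/(2*(j:ℝ))) * v (G j) := by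
      have hsplit : Finset.Icc m J = insert m (Finset.Icc (m+1) J) := by
        ext x
        simp only [Finset.mem_Icc, Finset.mem_insert]
        omega
      rw [hsplit, Finset.sum_insert (by simp only [Finset.mem_Icc]; omega)]
      have hsum_eq : ∑ j ∈ Finset.Icc (m+1) J, (1 + 1/(2*(j:ℝ))) * v (G j)
          = ∑ j ∈ Finset.Icc (m+1) J, ((1/(2*(j:ℝ))) * v (G j) + v (G j)) := by
        refine Finset.sum_congr rfl fun j _ => by ring
      rw [hsum_eq, Finset.sum_add_distrib]
      have hvm : (0:ℝ) ≤ v (G m) := (hvpos _ (le_trans hm1 (hGge m))).le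
      have hmR : (0:ℝ) < (m:ℝ) := by linarith
      have hnn : (0:ℝ) ≤ 1/(2*(m:ℝ)) * v (G m) := mul_nonneg (by positivity) hvm
      linarith
    rw [hB J hJ] at h0
    linarith
  -- assemble in ℝ≥0∞
  rw [ENNReal.tsum_eq_iSup_sum]
  refine iSup_le fun F => ?_
  set K : ℕ := F.sup id with hK_def
  set J : ℕ := max K m with hJ_def
  have hJm : m ≤ J := le_max_right _ _
  have hFsub : F ⊆ Finset.range (K+1) := fun k hk =>
    Finset.mem_range.2 (Nat.lt_succ_of_le (Finset.le_sup (f := id) hk))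
  refine le_trans (Finset.sum_le_sum_of_subset hFsub) ?_
  have hΨk_nn : ∀ k : ℕ, n ≤ k → 0 ≤ 1/Ψ (k:ℝ) := by
    intro k hk
    have : (0:ℝ) < (k:ℝ) := by
      have : 1 ≤ k := le_trans hnpos hk
      exact_mod_cast this
    exact (one_div_pos.2 (hΨpos _ this)).le
  have hstep1 : ∑ k ∈ Finset.range (K+1), (if (n:ℝ) ≤ (k:ℝ) then ENNReal.ofReal (1/Ψ k) else 0)
      ≤ ENNReal.ofReal (∑ k ∈ Finset.Icc n K, 1/Ψ (k:ℝ)) := by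
    have e1 : ∑ k ∈ Finset.range (K+1), (if (n:ℝ) ≤ (k:ℝ) then ENNReal.ofReal (1/Ψ k) else 0)
        ≤ ∑ k ∈ Finset.Icc n K, (if (n:ℝ) ≤ (k:ℝ) then ENNReal.ofReal (1/Ψ k) else 0) := by
      refine Finset.sum_le_sum_of_ne_zero fun k hk hne => ?_
      rw [Finset.mem_range] at hk
      rw [Finset.mem_Icc]
      constructor
      · by_contra hc
        push_neg at hc
        have : ¬ ((n:ℝ) ≤ (k:ℝ)) := by
          push_neg
          exact_mod_cast hc
        rw [if_neg this] at hne
        exact hne rfl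
      · omega
    have e2 : ∑ k ∈ Finset.Icc n K, (if (n:ℝ) ≤ (k:ℝ) then ENNReal.ofReal (1/Ψ k) else 0)
        = ∑ k ∈ Finset.Icc n K, ENNReal.ofReal (1/Ψ (k:ℝ)) := by
      refine Finset.sum_congr rfl fun k hk => ?_
      have hnk : n ≤ k := (Finset.mem_Icc.1 hk).1
      rw [if_pos (by exact_mod_cast hnk)]
    have e3 : ∑ k ∈ Finset.Icc n K, ENNReal.ofReal (1/Ψ (k:ℝ))
        = ENNReal.ofReal (∑ k ∈ Finset.Icc n K, 1/Ψ (k:ℝ)) :=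
      (ENNReal.ofReal_sum_of_nonneg fun k hk => hΨk_nn k (Finset.mem_Icc.1 hk).1).symm
    rw [e2, e3] at e1
    exact e1
  refine le_trans hstep1 ?_
  have hθ_nn : ∀ j : ℕ, m ≤ j → 0 ≤ 1/Ψ ((j:ℝ) + θ j) := by
    intro j hj
    have hj1 : 1 ≤ j := le_trans hm1 hj
    have hjpos : (0:ℝ) < (j:ℝ) := by exact_mod_cast hj1
    have := hθpos (j:ℝ) hjpos
    exact (one_div_pos.2 (hΨpos _ (by linarith))).le
  have hreal : ∑ k ∈ Finset.Icc n K, 1/Ψ (k:ℝ) ≤ ∑ j ∈ Finset.Icc m J, 1/Ψ ((j:ℝ) + θ j) := by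
    have hKle : K ≤ G J := le_trans (le_max_left K m) (hGge J)
    have hmono1 : ∑ k ∈ Finset.Icc n K, v k ≤ ∑ k ∈ Finset.Icc n (G J), v k := by
      refine Finset.sum_le_sum_of_subset_of_nonneg (Finset.Icc_subset_Icc_right hKle)
        (fun k hk _ => ?_)
      exact (hvpos k (le_trans hnpos (Finset.mem_Icc.1 hk).1)).le
    have h2 := key J hJm
    have h3 : ∑ j ∈ Finset.Icc m J, (1 + 1/(2*(j:ℝ))) * v (G j)
        ≤ ∑ j ∈ Finset.Icc m J, 1/Ψ ((j:ℝ) + θ j) :=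
      Finset.sum_le_sum fun j hj => hperterm j (Finset.mem_Icc.1 hj).1
    calc ∑ k ∈ Finset.Icc n K, 1/Ψ (k:ℝ) = ∑ k ∈ Finset.Icc n K, v k := rfl
    _ ≤ ∑ k ∈ Finset.Icc n (G J), v k := hmono1
    _ ≤ ∑ j ∈ Finset.Icc m J, (1 + 1/(2*(j:ℝ))) * v (G j) := h2
    _ ≤ ∑ j ∈ Finset.Icc m J, 1/Ψ ((j:ℝ) + θ j) := h3
  refine le_trans (ENNReal.ofReal_le_ofReal hreal) ?_
  have hcond : ∀ j : ℕ, m ≤ j → ((n:ℝ) - (⌊Real.log n⌋:ℝ)/2 - 1 ≤ (j:ℝ)) := by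
    intro j hj
    have hjm : (m:ℝ) ≤ (j:ℝ) := by exact_mod_cast hj
    rw [← htcast]
    have hst : (s:ℝ) ≤ (t:ℝ)/2 := by
      rw [hs_def]
      exact_mod_cast Nat.cast_div_le
    linarith [hmcast ▸ hjm]
  calc ENNReal.ofReal (∑ j ∈ Finset.Icc m J, 1/Ψ ((j:ℝ) + θ j))
      = ∑ j ∈ Finset.Icc m J, ENNReal.ofReal (1/Ψ ((j:ℝ) + θ j)) :=
        ENNReal.ofReal_sum_of_nonneg fun j hj => hθ_nn j (Finset.mem_Icc.1 hj).1
    _ = ∑ j ∈ Finset.Icc m J, (if (n:ℝ) - (⌊Real.log n⌋:ℝ)/2 - 1 ≤ (j:ℝ) then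
          ENNReal.ofReal (1/Ψ ((j:ℝ) + θ j)) else 0) :=
        Finset.sum_congr rfl fun j hj => (if_pos (hcond j (Finset.mem_Icc.1 hj).1)).symm
    _ ≤ ∑' k : ℕ, (if (n:ℝ) - (⌊Real.log n⌋:ℝ)/2 - 1 ≤ (k:ℝ) then
          ENNReal.ofReal (1/Ψ ((k:ℝ) + θ k)) else 0) := ENNReal.sum_le_tsum _
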